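/- Let h : ZMod N × ZMod M → ℝ be a mean-preserving kernel, g : ZMod N × ZMod M → ℝ an image with Σ_{n,m} g(n,m) = 0, λ > 0, and define E(f) = (1/2)·‖h ⋆ f − g‖₂² + λ·TV_a(f). For any image z, let μ = (NM)⁻¹·Σ_{n,m} z(n,m) be its mean and z̃ = z − μ·𝟙 (where 𝟙 is the all-ones image). Then E(z) = E(z̃) + (NM/2)·μ². In particular, every global minimizer of E over all images has zero mean. -/
import Mathlib


/-- Periodic discrete partial difference in the first (column) direction. -/
def gradX {N M : ℕ} (f : ZMod N × ZMod M → ℝ) : ZMod N × ZMod M → ℝ :=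
  fun p => f p - f (p.1 - 1, p.2)

/-- Periodic discrete partial difference in the second (row) direction. -/
def gradY {N M : ℕ} (f : ZMod N × ZMod M → ℝ) : ZMod N × ZMod M → ℝ :=
  fun p => f p - f (p.1, p.2 - 1)

/-- Anisotropic total variation. -/
noncomputable def TVa {N M : ℕ} [NeZero N] [NeZero M] (f : ZMod N × ZMod M → ℝ) : ℝ :=
  ∑ p : ZMod N × ZMod M, (|gradX f p| + |gradY f p|)

/-- Circular (periodic) convolution of a kernel `h` with an image `f`. -/
noncomputable def conv {N M : ℕ} [NeZero N] [NeZero M]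
    (h f : ZMod N × ZMod M → ℝ) : ZMod N × ZMod M → ℝ :=
  fun p => ∑ q : ZMod N × ZMod M, h q * f (p - q)

/-- The `ℓ₂`-norm of an image. -/
noncomputable def l2norm {N M : ℕ} [NeZero N] [NeZero M]
    (u : ZMod N × ZMod M → ℝ) : ℝ :=
  Real.sqrt (∑ p : ZMod N × ZMod M, (u p) ^ 2)

/-- The TV-regularized restoration functional
`E(f) = (1/2)·‖h ⋆ f − g‖₂² + λ·TV_a(f)`. -/
noncomputable def Efun {N M : ℕ} [NeZero N] [NeZero M]
    (h g : ZMod N × ZMod M → ℝ) (lam : ℝ) (f : ZMod N × ZMod M → ℝ) : ℝ :=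
  (1 / 2) * (∑ p : ZMod N × ZMod M, (conv h f p - g p) ^ 2) + lam * TVa f

theorem stmt17 {N M : ℕ} [NeZero N] [NeZero M] (h g : ZMod N × ZMod M → ℝ)
    (hmean : ∑ p : ZMod N × ZMod M, h p = 1)
    (hg : ∑ p : ZMod N × ZMod M, g p = 0) (lam : ℝ) (hlam : 0 < lam) :
    (∀ z : ZMod N × ZMod M → ℝ,
      Efun h g lam z =
        Efun h g lam
          (fun p => z p - (∑ q : ZMod N × ZMod M, z q) / ((N : ℝ) * (M : ℝ))) +
        ((N : ℝ) * (M : ℝ) / 2) *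
          ((∑ q : ZMod N × ZMod M, z q) / ((N : ℝ) * (M : ℝ))) ^ 2) ∧
    (∀ z : ZMod N × ZMod M → ℝ,
      (∀ w : ZMod N × ZMod M → ℝ, Efun h g lam z ≤ Efun h g lam w) →
        ∑ p : ZMod N × ZMod M, z p = 0) := by
  have hN : (N : ℝ) ≠ 0 := Nat.cast_ne_zero.mpr (NeZero.ne N)
  have hM : (M : ℝ) ≠ 0 := Nat.cast_ne_zero.mpr (NeZero.ne M)
  have hNM : (N : ℝ) * (M : ℝ) ≠ 0 := mul_ne_zero hN hM
  have hcard : (Fintype.card (ZMod N × ZMod M) : ℝ) = (N : ℝ) * (M : ℝ) := by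
    simp [Fintype.card_prod, ZMod.card]
  have key : ∀ z : ZMod N × ZMod M → ℝ,
      Efun h g lam z =
        Efun h g lam
          (fun p => z p - (∑ q : ZMod N × ZMod M, z q) / ((N : ℝ) * (M : ℝ))) +
        ((N : ℝ) * (M : ℝ) / 2) *
          ((∑ q : ZMod N × ZMod M, z q) / ((N : ℝ) * (M : ℝ))) ^ 2 := by
    intro z
    set S : ℝ := ∑ q : ZMod N × ZMod M, z q with hS
    set μ : ℝ := S / ((N : ℝ) * (M : ℝ)) with hμ
    have hconv : ∀ p, conv h (fun p => z p - μ) p = conv h z p - μ := by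
      intro p
      simp only [conv, mul_sub, Finset.sum_sub_distrib, ← Finset.sum_mul, hmean, one_mul]
    have hTV : TVa (fun p => z p - μ) = TVa z := by
      simp [TVa, gradX, gradY]
    have hsum : ∑ p : ZMod N × ZMod M, conv h z p = S := by
      simp only [conv]
      rw [Finset.sum_comm]
      have : ∀ q : ZMod N × ZMod M, ∑ p : ZMod N × ZMod M, z (p - q) = S := by
        intro q
        exact Fintype.sum_equiv (Equiv.subRight q) _ _ (fun p => rfl)
      calc ∑ q : ZMod N × ZMod M, ∑ p : ZMod N × ZMod M, h q * z (p - q)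
          = ∑ q : ZMod N × ZMod M, h q * S := by
            refine Finset.sum_congr rfl fun q _ => ?_
            rw [← Finset.mul_sum, this q]
        _ = S := by rw [← Finset.sum_mul, hmean, one_mul]
    have hsq : ∑ p : ZMod N × ZMod M, (conv h (fun p => z p - μ) p - g p) ^ 2
        = ∑ p : ZMod N × ZMod M, ((conv h z p - g p) ^ 2 - 2 * μ * (conv h z p - g p) + μ ^ 2) := by
      refine Finset.sum_congr rfl fun p _ => ?_
      rw [hconv p]; ring
    have hexp : ∑ p : ZMod N × ZMod M, (conv h (fun p => z p - μ) p - g p) ^ 2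
        = (∑ p : ZMod N × ZMod M, (conv h z p - g p) ^ 2) - 2 * μ * S + ((N:ℝ)*(M:ℝ)) * μ ^ 2 := by
      rw [hsq]
      rw [Finset.sum_add_distrib, Finset.sum_sub_distrib]
      rw [Finset.sum_const, nsmul_eq_mul, Finset.card_univ, hcard]
      rw [← Finset.mul_sum, Finset.sum_sub_distrib, hg, sub_zero, hsum]
    have hμS : S = ((N:ℝ)*(M:ℝ)) * μ := by
      rw [hμ]; field_simp
    simp only [Efun, hTV, hexp]
    rw [hμS]; ring
  refine ⟨key, fun z hmin => ?_⟩
  set S : ℝ := ∑ q : ZMod N × ZMod M, z q with hS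
  have h1 := key z
  have h2 := hmin (fun p => z p - S / ((N : ℝ) * (M : ℝ)))
  have hle : ((N : ℝ) * (M : ℝ) / 2) * (S / ((N : ℝ) * (M : ℝ))) ^ 2 ≤ 0 := by
    nlinarith [h1, h2]
  have hpos : (0:ℝ) < (N : ℝ) * (M : ℝ) := by
    have : (0:ℝ) < (N:ℝ) := Nat.cast_pos.mpr (Nat.pos_of_ne_zero (NeZero.ne N))
    have : (0:ℝ) < (M:ℝ) := Nat.cast_pos.mpr (Nat.pos_of_ne_zero (NeZero.ne M))
    positivity
  have : (S / ((N : ℝ) * (M : ℝ))) ^ 2 = 0 := by nlinarith [sq_nonneg (S / ((N : ℝ) * (M : ℝ)))]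
  have : S / ((N : ℝ) * (M : ℝ)) = 0 := by
    exact pow_eq_zero_iff (n := 2) (by norm_num) |>.mp this
  rw [div_eq_zero_iff] at this
  rcases this with h' | h'
  · exact h'
  · exact absurd h' hNM
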